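/- In the hypercube Q_n with n ≥ 2, for every vertex v and every other vertex u, the edges incident to v do not lie on all shortest paths between any pair of vertices avoiding v; consequently, every MEG-set of Q_n contains every vertex. -/

import Mathlib

open SimpleGraph

/-- Two vertices `x` and `y` monitor an edge `e` in `G`: there is a shortest path between
them, and `e` lies on every shortest path between `x` and `y`. -/
def Monitors {V : Type*} (G : SimpleGraph V) (x y : V) (e : Sym2 V) : Prop :=
  (∃ p : G.Walk x y, p.IsPath ∧ p.length = G.dist x y) ∧
    ∀ p : G.Walk x y, p.IsPath → p.length = G.dist x y → e ∈ p.edges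

/-- `S` is a monitoring edge-geodetic set of `G`. -/
def IsMEGSet {V : Type*} (G : SimpleGraph V) (S : Set V) : Prop :=
  ∀ e ∈ G.edgeSet, ∃ x ∈ S, ∃ y ∈ S, Monitors G x y e

/-- The minimum size of a monitoring edge-geodetic set of `G`. -/
noncomputable def megNum {V : Type*} (G : SimpleGraph V) : ℕ :=
  sInf {n | ∃ S : Set V, IsMEGSet G S ∧ S.ncard = n}

/-- The set of leaves (degree-1 vertices) of `G`. -/
def leaves {V : Type*} (G : SimpleGraph V) : Set V :=
  {v | (G.neighborSet v).ncard = 1}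


/-- The hypercube graph of dimension `n`: vertices are binary strings of length `n`,
adjacent iff they differ in exactly one bit. -/
def hypercubeGraph (n : ℕ) : SimpleGraph (Fin n → Bool) where
  Adj x y := ∃! i, x i ≠ y i
  symm := by
    constructor
    rintro x y ⟨i, hi, hu⟩
    exact ⟨i, hi.symm, fun j hj => hu j hj.symm⟩
  loopless := by
    constructor
    rintro x ⟨i, hi, -⟩
    exact hi rfl

private lemma bool_ne_trans {a b c : Bool} : a ≠ b → b ≠ c → a = c := by
  intro h1 h2; cases a <;> cases b <;> cases c <;> simp_all

private lemma hyper_adj_update {n : ℕ} (x : Fin n → Bool) (i : Fin n) :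
    (hypercubeGraph n).Adj x (Function.update x i (!x i)) := by
  refine ⟨i, ?_, fun j hj => ?_⟩
  · show x i ≠ Function.update x i (!x i) i
    rw [Function.update_self]; cases x i <;> simp
  · by_contra hji
    exact hj (Function.update_of_ne hji _ _).symm

/-- Flip the bits in `L` one at a time, producing a walk of length `L.length` all of whose
vertices differ from `x` only inside `L`. -/
private lemma exists_walk_aux {n : ℕ} :
    ∀ (L : List (Fin n)), L.Nodup → ∀ x y : Fin n → Bool,
      (∀ i, x i ≠ y i ↔ i ∈ L) →
      ∃ p : (hypercubeGraph n).Walk x y, p.length = L.length ∧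
        ∀ z ∈ p.support, ∀ i, z i ≠ x i → i ∈ L := by
  intro L
  induction L with
  | nil =>
      intro _ x y h
      have hxy : x = y := by
        funext i
        by_contra hne
        simpa using (h i).1 hne
      subst hxy
      exact ⟨SimpleGraph.Walk.nil, by simp, by simp⟩
  | cons i L ih =>
      intro hnd x y h
      have hiL : i ∉ L := (List.nodup_cons.mp hnd).1
      set x' := Function.update x i (!x i) with hx'
      have hxi : x i ≠ y i := (h i).2 (by simp)
      have hx'y : ∀ j, x' j ≠ y j ↔ j ∈ L := by
        intro j
        by_cases hji : j = i
        · subst hji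
          have : x' j = y j := by
            rw [hx', Function.update_self]
            cases hxj : x j <;> cases hyj : y j <;> simp_all
          simp [this, hiL]
        · rw [hx', Function.update_of_ne hji]
          rw [h j]
          simp [hji]
      obtain ⟨p', hlen', hsup'⟩ := ih (List.nodup_cons.mp hnd).2 x' y hx'y
      refine ⟨SimpleGraph.Walk.cons (hyper_adj_update x i) p', by simp [hlen'], ?_⟩
      intro z hz j hj
      rw [SimpleGraph.Walk.support_cons, List.mem_cons] at hz
      rcases hz with rfl | hz
      · exact absurd rfl hj
      · by_cases hji : j = i
        · simp [hji]
        · have : x' j = x j := Function.update_of_ne hji _ _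
          have := hsup' z hz j (by rw [this]; exact hj)
          simp [this]

/-- Any walk has length at least the Hamming distance of its endpoints. -/
private lemma ham_le_length {n : ℕ} {x y : Fin n → Bool}
    (p : (hypercubeGraph n).Walk x y) :
    (Finset.univ.filter fun i => x i ≠ y i).card ≤ p.length := by
  induction p with
  | nil => simp
  | @cons a b c hab p ih =>
      obtain ⟨i, hi, hu⟩ := id hab
      have hsub : (Finset.univ.filter fun j => a j ≠ c j) ⊆
          insert i (Finset.univ.filter fun j => b j ≠ c j) := by
        intro j hj
        rw [Finset.mem_filter] at hj
        by_cases hji : j = i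
        · simp [hji]
        · have hab' : a j = b j := by
            by_contra hne
            exact hji (hu j hne)
          rw [Finset.mem_insert, Finset.mem_filter]
          exact Or.inr ⟨Finset.mem_univ _, hab' ▸ hj.2⟩
      calc (Finset.univ.filter fun j => a j ≠ c j).card
          ≤ (insert i (Finset.univ.filter fun j => b j ≠ c j)).card := Finset.card_le_card hsub
        _ ≤ (Finset.univ.filter fun j => b j ≠ c j).card + 1 := Finset.card_insert_le _ _
        _ ≤ p.length + 1 := by omega
        _ = (SimpleGraph.Walk.cons hab p).length := by simp

/-- There is a walk of Hamming-distance length from `x` to `y` avoiding `v`. -/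
private lemma exists_walk_avoiding {n : ℕ} (x y v : Fin n → Bool)
    (hx : x ≠ v) (hy : y ≠ v) :
    ∃ p : (hypercubeGraph n).Walk x y,
      p.length = (Finset.univ.filter fun i => x i ≠ y i).card ∧ v ∉ p.support := by
  set D := Finset.univ.filter fun i => x i ≠ y i with hD
  by_cases hcase : ∃ j, j ∉ D ∧ v j ≠ x j
  · obtain ⟨j, hjD, hjvx⟩ := hcase
    obtain ⟨p, hlen, hsup⟩ := exists_walk_aux D.toList D.nodup_toList x y
      (fun i => by rw [Finset.mem_toList, hD, Finset.mem_filter]; simp)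
    refine ⟨p, by rw [hlen, Finset.length_toList], fun hv => ?_⟩
    have := hsup v hv j hjvx
    rw [Finset.mem_toList] at this
    exact hjD this
  · push_neg at hcase
    -- v agrees with x outside D; find i ∈ D with v i = x i
    have : ∃ i, x i ≠ y i ∧ v i = x i := by
      by_contra hcon
      push_neg at hcon
      apply hy
      funext i
      by_cases hi : x i ≠ y i
      · have hvi := hcon i hi
        exact bool_ne_trans (Ne.symm hi) (Ne.symm hvi)
      · push_neg at hi
        have : v i = x i := hcase i (by rw [hD, Finset.mem_filter]; simp [hi])
        rw [← hi, this]
    obtain ⟨i, hixy, hivx⟩ := this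
    have hiD : i ∈ D := by rw [hD, Finset.mem_filter]; exact ⟨Finset.mem_univ _, hixy⟩
    set x' := Function.update x i (!x i) with hx'
    have hkey : ∀ j, x' j ≠ y j ↔ j ∈ (D.erase i).toList := by
      intro j
      rw [Finset.mem_toList, Finset.mem_erase]
      by_cases hji : j = i
      · subst hji
        have : x' j = y j := by
          rw [hx', Function.update_self]
          cases hxj : x j <;> cases hyj : y j <;> simp_all
        simp [this]
      · rw [hx', Function.update_of_ne hji, hD, Finset.mem_filter]
        simp [hji]
    obtain ⟨p', hlen', hsup'⟩ := exists_walk_aux (D.erase i).toList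
      (D.erase i).nodup_toList x' y hkey
    refine ⟨SimpleGraph.Walk.cons (hyper_adj_update x i) p', ?_, ?_⟩
    · have h1 : 1 ≤ D.card := Finset.card_pos.mpr ⟨i, hiD⟩
      rw [SimpleGraph.Walk.length_cons, hlen', Finset.length_toList,
        Finset.card_erase_of_mem hiD]
      omega
    · intro hv
      rw [SimpleGraph.Walk.support_cons, List.mem_cons] at hv
      rcases hv with rfl | hv
      · exact hx rfl
      · have hvi : v i ≠ x' i := by
          rw [hx', Function.update_self, hivx]
          simp
        have := hsup' v hv i hvi
        rw [Finset.mem_toList, Finset.mem_erase] at this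
        exact this.1 rfl

theorem hypercube_no_avoiding_monitor (n : ℕ) (hn : 2 ≤ n) :
    (∀ (v : Fin n → Bool) (e : Sym2 (Fin n → Bool)), e ∈ (hypercubeGraph n).edgeSet →
      v ∈ e → ∀ x y : Fin n → Bool, x ≠ v → y ≠ v → ¬ Monitors (hypercubeGraph n) x y e) ∧
    ∀ S : Set (Fin n → Bool), IsMEGSet (hypercubeGraph n) S → ∀ v, v ∈ S := by
  have part1 : ∀ (v : Fin n → Bool) (e : Sym2 (Fin n → Bool)),
      e ∈ (hypercubeGraph n).edgeSet → v ∈ e →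
      ∀ x y : Fin n → Bool, x ≠ v → y ≠ v → ¬ Monitors (hypercubeGraph n) x y e := by
    intro v e he hve x y hx hy hmon
    obtain ⟨⟨p0, hp0path, hp0len⟩, hall⟩ := hmon
    obtain ⟨p, hplen, hpsup⟩ := exists_walk_avoiding x y v hx hy
    have hham_dist : (Finset.univ.filter fun i => x i ≠ y i).card ≤
        (hypercubeGraph n).dist x y := hp0len ▸ ham_le_length p0
    set q := p.bypass with hq
    have hqpath : q.IsPath := SimpleGraph.Walk.bypass_isPath p
    have hqle : q.length ≤ p.length := SimpleGraph.Walk.length_bypass_le p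
    have hdistq : (hypercubeGraph n).dist x y ≤ q.length :=
      SimpleGraph.dist_le q
    have hqlen : q.length = (hypercubeGraph n).dist x y := by omega
    have hemem : e ∈ q.edges := hall q hqpath hqlen
    have hvsup : v ∈ q.support := by
      induction e with
      | h a b =>
        rcases Sym2.mem_iff.mp hve with rfl | rfl
        · exact SimpleGraph.Walk.fst_mem_support_of_mem_edges q hemem
        · exact SimpleGraph.Walk.snd_mem_support_of_mem_edges q hemem
    exact hpsup (SimpleGraph.Walk.support_bypass_subset p hvsup)
  refine ⟨part1, ?_⟩
  intro S hS v
  have hi : (0 : ℕ) < n := by omega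
  set i : Fin n := ⟨0, hi⟩ with hidef
  set w := Function.update v i (!v i) with hw
  have he : s(v, w) ∈ (hypercubeGraph n).edgeSet :=
    (hypercubeGraph n).mem_edgeSet.mpr (hyper_adj_update v i)
  obtain ⟨x, hxS, y, hyS, hmon⟩ := hS _ he
  by_cases hxv : x = v
  · exact hxv ▸ hxS
  · by_cases hyv : y = v
    · exact hyv ▸ hyS
    · exact absurd hmon (part1 v _ he (Sym2.mem_mk_left v w) x y hxv hyv)
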